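/- Let f(x,y) = y² + a₁xy + a₃y − x³ − a₂x² − a₄x − a₆ over a commutative ring R, let p = 2, and let P be the derivation with P(x) = 2y + a₁x + a₃ and P(y) = −(3x² + 2a₂x + a₄ − a₁y). Then for every h ∈ R[x,y], ∂²/∂x∂y (f·h) ≡ (P + a₁)(h) modulo the ideal generated by 2 and f. (This is the Stöhr–Voloch formula for the Cartier operator in characteristic 2.) -/

import Mathlib

open MvPolynomial

/-- Base ring `R = ℤ[a₁,a₂,a₃,a₄,a₆]`. -/
noncomputable abbrev WRing : Type := MvPolynomial (Fin 5) ℤ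

set_option maxHeartbeats 2000000 in
set_option synthInstance.maxHeartbeats 400000 in
/-- Stöhr–Voloch formula for the Cartier operator in characteristic `p = 2`:
for `f = y² + a₁xy + a₃y - x³ - a₂x² - a₄x - a₆` and the invariant vector field `P`
with `P(x) = 2y + a₁x + a₃`, `P(y) = a₁y - 3x² - 2a₂x - a₄`, one has
`∂_x ∂_y (f·h) ≡ (P + a₁)(h) mod (2, f)` for every `h ∈ R[x,y]`.
Here `x = X 0`, `y = X 1`, and `aᵢ` are the variables of `WRing`. -/
theorem cartier_formula_char_two :
    letI a₁ : WRing := X 0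
    letI a₂ : WRing := X 1
    letI a₃ : WRing := X 2
    letI a₄ : WRing := X 3
    letI a₆ : WRing := X 4
    letI x : MvPolynomial (Fin 2) WRing := X 0
    letI y : MvPolynomial (Fin 2) WRing := X 1
    letI f : MvPolynomial (Fin 2) WRing :=
      y ^ 2 + C a₁ * x * y + C a₃ * y - x ^ 3 - C a₂ * x ^ 2 - C a₄ * x - C a₆
    letI P : Derivation WRing (MvPolynomial (Fin 2) WRing) (MvPolynomial (Fin 2) WRing) :=
      MvPolynomial.mkDerivation WRing fun i =>
        if i = 0 then 2 * y + C a₁ * x + C a₃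
        else C a₁ * y - 3 * x ^ 2 - 2 * C a₂ * x - C a₄
    ∀ h : MvPolynomial (Fin 2) WRing,
      pderiv 0 (pderiv 1 (f * h)) - (P h + C a₁ * h) ∈
        Ideal.span {(2 : MvPolynomial (Fin 2) WRing), f} := by
  intro h
  set a₁ : WRing := X 0 with ha₁
  set a₂ : WRing := X 1 with ha₂
  set a₃ : WRing := X 2 with ha₃
  set a₄ : WRing := X 3 with ha₄
  set a₆ : WRing := X 4 with ha₆
  set x : MvPolynomial (Fin 2) WRing := X 0 with hx
  set y : MvPolynomial (Fin 2) WRing := X 1 with hy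
  set f : MvPolynomial (Fin 2) WRing :=
      y ^ 2 + C a₁ * x * y + C a₃ * y - x ^ 3 - C a₂ * x ^ 2 - C a₄ * x - C a₆ with hf
  set P : Derivation WRing (MvPolynomial (Fin 2) WRing) (MvPolynomial (Fin 2) WRing) :=
      MvPolynomial.mkDerivation WRing fun i =>
        if i = 0 then 2 * y + C a₁ * x + C a₃
        else C a₁ * y - 3 * x ^ 2 - 2 * C a₂ * x - C a₄ with hPdef
  set px : MvPolynomial (Fin 2) WRing := 2 * y + C a₁ * x + C a₃ with hpx
  set py : MvPolynomial (Fin 2) WRing := C a₁ * y - 3 * x ^ 2 - 2 * C a₂ * x - C a₄ with hpy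
  have hP : P = px • (pderiv 0 : Derivation WRing (MvPolynomial (Fin 2) WRing) (MvPolynomial (Fin 2) WRing)) + py • (pderiv 1 : Derivation WRing (MvPolynomial (Fin 2) WRing) (MvPolynomial (Fin 2) WRing)) := by
    apply MvPolynomial.derivation_ext
    intro i
    fin_cases i <;>
      simp [P, px, py, MvPolynomial.mkDerivation_X, pderiv_X, Pi.single, Function.update]
  have hPh : P h = px * pderiv 0 h + py * pderiv 1 h := by
    rw [hP]; simp [smul_eq_mul]
  have hfy : pderiv 1 f = px := by
    simp [f, hpx, x, y, a₁, a₃]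
  have hfx : pderiv 0 f = py := by
    simp [f, hpy, x, y]; ring
  have key : pderiv 0 (pderiv 1 (f * h)) - (P h + C a₁ * h) =
      f * pderiv 0 (pderiv 1 h) := by
    have h2 : (2 : MvPolynomial (Fin 2) WRing) = C 2 := (map_ofNat C 2).symm
    have h0px : pderiv 0 px = C a₁ := by
      rw [hpx, h2]; simp [x, y]
    rw [Derivation.leibniz, hfy, smul_eq_mul, smul_eq_mul, map_add,
      Derivation.leibniz, Derivation.leibniz, hfx, h0px, hPh]
    simp only [smul_eq_mul]
    ring
  rw [key]
  exact Ideal.mul_mem_right _ _ (Ideal.subset_span (by simp))
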